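/- Let R be a commutative ℚ-algebra, and let f, g ∈ R((t))* with f ∈ 1 + t·R[[t]] (or more generally with the property that log f is defined, i.e. f = 1 + h with residue computations valid). Then res(log f · dg/g) is a nilpotent element of R, where res takes the coefficient of t^{-1} dt. -/

import Mathlib

noncomputable section

namespace CC

variable {R : Type*} [CommRing R]

/-- Formal derivative of a Laurent series. -/
def DerivT (f : LaurentSeries R) : LaurentSeries R where
  coeff n := (n + 1) • f.coeff (n + 1)
  isPWO_support' := by
    have hsub : Function.support (fun n : ℤ => (n + 1) • f.coeff (n + 1)) ⊆
        (fun n : ℤ => n - 1) '' Function.support f.coeff := by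
      intro n hn
      have h1 : (n + 1) • f.coeff (n + 1) ≠ 0 := hn
      have h2 : f.coeff (n + 1) ≠ 0 := fun h => h1 (by rw [h, smul_zero])
      exact ⟨n + 1, h2, by ring⟩
    have hmono : Monotone fun n : ℤ => n - 1 := fun a b h => by dsimp only; omega
    exact (Set.IsPWO.image_of_monotoneOn f.isPWO_support' (hmono.monotoneOn _)).mono hsub

@[simp] lemma DerivT_coeff (f : LaurentSeries R) (n : ℤ) :
    (DerivT f).coeff n = (n + 1) • f.coeff (n + 1) := rfl

/-- The formal logarithm of a power series `f` with constant term `1` over a `ℚ`-algebra: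
`log f = −∑_{p≥1} (1−f)^p / p`.  Since `(1−f)^p` has order at least `p`, the `n`-th
coefficient only involves the terms with `p ≤ n`. -/
def logS [Algebra ℚ R] (f : PowerSeries R) : PowerSeries R :=
  PowerSeries.mk fun n =>
    PowerSeries.coeff n (-(∑ p ∈ Finset.Icc 1 n, ((p : ℚ)⁻¹) • (1 - f) ^ p))

lemma mul_coeff_neg {K : Type*} [CommRing K] {x y : LaurentSeries K}
    (hx : ∀ n < (0 : ℤ), x.coeff n = 0) (hy : ∀ n < (0 : ℤ), y.coeff n = 0) :
    ∀ n < (0 : ℤ), (x * y).coeff n = 0 := by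
  intro n hn
  rw [HahnSeries.coeff_mul]
  refine Finset.sum_eq_zero fun ij hij => ?_
  rw [Finset.mem_addAntidiagonal] at hij
  obtain ⟨h1, h2, h3⟩ := hij
  by_cases hi : ij.1 < 0
  · exact absurd (hx _ hi) h1
  · have hj : ij.2 < 0 := by omega
    exact absurd (hy _ hj) h2

lemma DerivT_single_mul {K : Type*} [CommRing K] (d : ℤ) (P : LaurentSeries K) :
    DerivT (HahnSeries.single d (1 : K) * P) =
      HahnSeries.single (d - 1) ((d : ℤ) • (1 : K)) * P +
        HahnSeries.single d (1 : K) * DerivT P := by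
  ext n
  have h1 : (HahnSeries.single d (1 : K) * P).coeff (n + 1) = P.coeff (n + 1 - d) := by
    have := HahnSeries.coeff_single_mul_add (r := (1 : K)) (x := P) (a := n + 1 - d) (b := d)
    rw [one_mul, show n + 1 - d + d = n + 1 by ring] at this
    exact this
  have h2 : (HahnSeries.single (d - 1) ((d : ℤ) • (1 : K)) * P).coeff n =
      ((d : ℤ) • (1 : K)) * P.coeff (n + 1 - d) := by
    have := HahnSeries.coeff_single_mul_add (r := (d : ℤ) • (1 : K)) (x := P)
      (a := n + 1 - d) (b := d - 1)
    rw [show n + 1 - d + (d - 1) = n by ring] at this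
    exact this
  have h3 : (HahnSeries.single d (1 : K) * DerivT P).coeff n =
      (DerivT P).coeff (n - d) := by
    have := HahnSeries.coeff_single_mul_add (r := (1 : K)) (x := DerivT P) (a := n - d) (b := d)
    rw [one_mul, show n - d + d = n by ring] at this
    exact this
  rw [HahnSeries.coeff_add, DerivT_coeff, h1, h2, h3, DerivT_coeff,
    show n - d + 1 = n + 1 - d by ring]
  rw [smul_mul_assoc, one_mul]
  rw [← add_smul]
  congr 1
  ring

/-- The key vanishing statement over an integral domain. -/
lemma key_vanish {K : Type*} [CommRing K] [IsDomain K] (L a b : LaurentSeries K)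
    (hL : ∀ n < (0 : ℤ), L.coeff n = 0) (hL0 : L.coeff 0 = 0) (hab : a * b = 1) :
    (L * DerivT a * b).coeff (-1) = 0 := by
  have ha0 : a ≠ 0 := by
    rintro rfl; rw [zero_mul] at hab; exact one_ne_zero hab.symm
  have hb0 : b ≠ 0 := by
    rintro rfl; rw [mul_zero] at hab; exact one_ne_zero hab.symm
  set d := a.order with hd
  set e := b.order with he
  have hde : d + e = 0 := by
    have := HahnSeries.order_mul ha0 hb0
    rw [hab, HahnSeries.order_one] at this
    exact this.symm
  set Pa : LaurentSeries K := (HahnSeries.ofPowerSeries ℤ K) a.powerSeriesPart with hPa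
  set Pb : LaurentSeries K := (HahnSeries.ofPowerSeries ℤ K) b.powerSeriesPart with hPb
  have ha : HahnSeries.single d (1 : K) * Pa = a :=
    a.single_order_mul_powerSeriesPart
  have hb : HahnSeries.single e (1 : K) * Pb = b :=
    b.single_order_mul_powerSeriesPart
  have hsingle : HahnSeries.single d (1 : K) * HahnSeries.single e (1 : K) = 1 := by
    rw [HahnSeries.single_mul_single, one_mul, hde, HahnSeries.single_zero_one]
  have hPaPb : Pa * Pb = 1 := by
    have h : (HahnSeries.single d (1 : K) * Pa) * (HahnSeries.single e (1 : K) * Pb) =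
        (HahnSeries.single d (1 : K) * HahnSeries.single e (1 : K)) * (Pa * Pb) := by ring
    rw [ha, hb, hab, hsingle, one_mul] at h
    exact h.symm
  have hDa : DerivT a =
      HahnSeries.single (d - 1) ((d : ℤ) • (1 : K)) * Pa +
        HahnSeries.single d (1 : K) * DerivT Pa := by
    rw [← ha, DerivT_single_mul]
  have hexpand : L * DerivT a * b =
      HahnSeries.single (-1 : ℤ) ((d : ℤ) • (1 : K)) * L + L * DerivT Pa * Pb := by
    rw [hDa, ← hb]
    have hs2 : HahnSeries.single (d - 1) ((d : ℤ) • (1 : K)) *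
        HahnSeries.single e (1 : K) = HahnSeries.single (-1 : ℤ) ((d : ℤ) • (1 : K)) := by
      rw [HahnSeries.single_mul_single, mul_one, show d - 1 + e = -1 by omega]
    calc L * (HahnSeries.single (d - 1) ((d : ℤ) • (1 : K)) * Pa +
            HahnSeries.single d (1 : K) * DerivT Pa) * (HahnSeries.single e (1 : K) * Pb)
        = (HahnSeries.single (d - 1) ((d : ℤ) • (1 : K)) * HahnSeries.single e (1 : K)) *
            L * (Pa * Pb) +
          (HahnSeries.single d (1 : K) * HahnSeries.single e (1 : K)) *
            (L * DerivT Pa * Pb) := by ring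
      _ = HahnSeries.single (-1 : ℤ) ((d : ℤ) • (1 : K)) * L + L * DerivT Pa * Pb := by
          rw [hs2, hsingle, hPaPb, mul_one, one_mul]
  rw [hexpand, HahnSeries.coeff_add]
  have hfirst : (HahnSeries.single (-1 : ℤ) ((d : ℤ) • (1 : K)) * L).coeff (-1) = 0 := by
    have := HahnSeries.coeff_single_mul_add (r := (d : ℤ) • (1 : K)) (x := L)
      (a := (0 : ℤ)) (b := -1)
    rw [show (0 : ℤ) + -1 = -1 by ring, hL0, mul_zero] at this
    exact this
  have hPac : ∀ n < (0 : ℤ), Pa.coeff n = 0 := by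
    intro n hn
    rw [hPa, PowerSeries.coeff_coe, if_pos hn]
  have hPbc : ∀ n < (0 : ℤ), Pb.coeff n = 0 := by
    intro n hn
    rw [hPb, PowerSeries.coeff_coe, if_pos hn]
  have hDPa : ∀ n < (0 : ℤ), (DerivT Pa).coeff n = 0 := by
    intro n hn
    rw [DerivT_coeff]
    rcases lt_or_eq_of_le (by omega : n + 1 ≤ 0) with h | h
    · rw [hPac _ h, smul_zero]
    · rw [h, zero_smul]
  have hsecond : (L * DerivT Pa * Pb).coeff (-1) = 0 :=
    mul_coeff_neg (mul_coeff_neg hL hDPa) hPbc (-1) (by norm_num)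
  rw [hfirst, hsecond, add_zero]

lemma map_DerivT {K S : Type*} [CommRing K] [CommRing S] (φ : K →+* S)
    (x : LaurentSeries K) : (DerivT x).map (φ : K →+* S) = DerivT (x.map φ) := by
  ext n
  simp [map_zsmul]

/-- **Nilpotency of the residue pairing `res(log f · dg/g)`.**
Let `R` be a commutative `ℚ`-algebra, `f ∈ 1 + t·R[[t]]` (so that `log f` is defined) and
`g ∈ R((t))*`.  Then `res(log f · dg/g)` is a nilpotent element of `R`, where `res` takes
the coefficient of `t⁻¹ dt`. -/
theorem isNilpotent_res_log_mul_dlog [Algebra ℚ R]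
    (f : PowerSeries R) (hf : PowerSeries.constantCoeff f = 1)
    (g : (LaurentSeries R)ˣ) :
    IsNilpotent
      ((((HahnSeries.ofPowerSeries ℤ R) (logS f) : LaurentSeries R) *
          DerivT (g : LaurentSeries R) * ((g⁻¹ : (LaurentSeries R)ˣ) : LaurentSeries R)).coeff
        (-1)) := by
  rw [← mem_nilradical, nilradical_eq_sInf, Submodule.mem_sInf]
  intro J hJ
  haveI : Ideal.IsPrime J := hJ
  set K := FractionRing (R ⧸ J)
  set φ : R →+* K := (algebraMap (R ⧸ J) K).comp (Ideal.Quotient.mk J) with hφ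
  rw [← Ideal.Quotient.eq_zero_iff_mem]
  apply IsFractionRing.injective (R ⧸ J) K
  rw [map_zero]
  have hmul : ∀ x y : LaurentSeries R, (x * y).map φ = (x.map φ) * (y.map φ) := by
    intro x y
    exact HahnSeries.map_mul (φ : R →ₙ+* K)
  have hone : (1 : LaurentSeries R).map φ = 1 := HahnSeries.map_one (φ.toMonoidWithZeroHom : R →*₀ K)
  have hu : ((g : LaurentSeries R).map φ) *
      (((g⁻¹ : (LaurentSeries R)ˣ) : LaurentSeries R).map φ) = 1 := by
    rw [← hmul, Units.mul_inv, hone]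
  set L : LaurentSeries K :=
    (((HahnSeries.ofPowerSeries ℤ R) (logS f) : LaurentSeries R)).map φ with hLdef
  have hL : ∀ n < (0 : ℤ), L.coeff n = 0 := by
    intro n hn
    rw [hLdef, HahnSeries.map_coeff, PowerSeries.coeff_coe, if_pos hn, map_zero]
  have hlog0 : PowerSeries.coeff 0 (logS f) = 0 := by
    rw [logS, PowerSeries.coeff_mk, Finset.Icc_eq_empty (by norm_num : ¬(1 : ℕ) ≤ 0),
      Finset.sum_empty, neg_zero, map_zero]
  have hL0 : L.coeff 0 = 0 := by
    rw [hLdef, HahnSeries.map_coeff, PowerSeries.coeff_coe, if_neg (by norm_num)]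
    simp only [Int.natAbs_zero]
    rw [hlog0, map_zero]
  have key := key_vanish L ((g : LaurentSeries R).map φ)
    (((g⁻¹ : (LaurentSeries R)ˣ) : LaurentSeries R).map φ) hL hL0 hu
  rw [← map_DerivT] at key
  calc (algebraMap (R ⧸ J) K) ((Ideal.Quotient.mk J)
        ((((HahnSeries.ofPowerSeries ℤ R) (logS f) : LaurentSeries R) *
          DerivT (g : LaurentSeries R) *
          ((g⁻¹ : (LaurentSeries R)ˣ) : LaurentSeries R)).coeff (-1)))
      = (((((HahnSeries.ofPowerSeries ℤ R) (logS f) : LaurentSeries R) *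
          DerivT (g : LaurentSeries R) *
          ((g⁻¹ : (LaurentSeries R)ˣ) : LaurentSeries R)).map φ)).coeff (-1) := by
        rw [HahnSeries.map_coeff]; rfl
    _ = (L * (DerivT (g : LaurentSeries R)).map φ *
          (((g⁻¹ : (LaurentSeries R)ˣ) : LaurentSeries R).map φ)).coeff (-1) := by
        rw [hmul, hmul]
    _ = 0 := key

end CC
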